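/- Let f : ℝ → ℝ be a concave function such that f(0) = 0, f is differentiable at 0 with f'(0) ≠ 0, f is bounded above with sup f > 0, and there exists x* > 0 with f(x*) > 0. Let P and Q be probability measures on a measurable space X. Define D^Rp(P, Q) = ⨆_C 2·∫∫ f(C(x) − C(y)) d(P ⊗ Q)(x, y), where the supremum is taken over all bounded measurable functions C : X → ℝ. Then D^Rp(P, Q) ≥ 0, and D^Rp(P, Q) = 0 if and only if P = Q. -/

import Mathlib

open MeasureTheory

lemma aux_pos_of_deriv {g : ℝ → ℝ} {d : ℝ} (hg : HasDerivAt g d 0) (hg0 : g 0 = 0)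
    (hd : d ≠ 0) : ∃ c : ℝ, 0 < g c := by
  rw [hasDerivAt_iff_tendsto_slope] at hg
  rcases hd.lt_or_gt with hdneg | hdpos
  · have hev : ∀ᶠ c in nhdsWithin (0:ℝ) {0}ᶜ, slope g 0 c < 0 := hg.eventually (gt_mem_nhds hdneg)
    have hle : nhdsWithin (0:ℝ) (Set.Iio 0) ≤ nhdsWithin (0:ℝ) {0}ᶜ :=
      nhdsWithin_mono _ (fun x hx => ne_of_lt hx)
    obtain ⟨c, hc1, hc2⟩ := ((hev.filter_mono hle).and self_mem_nhdsWithin).exists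
    refine ⟨c, ?_⟩
    have hslope : slope g 0 c = g c / c := by simp [slope_def_field, hg0]
    rw [hslope] at hc1
    rcases div_neg_iff.mp hc1 with ⟨h1, _⟩ | ⟨_, h2⟩
    · exact h1
    · exact absurd hc2 (not_lt.mpr h2.le)
  · have hev : ∀ᶠ c in nhdsWithin (0:ℝ) {0}ᶜ, 0 < slope g 0 c := hg.eventually (lt_mem_nhds hdpos)
    have hle : nhdsWithin (0:ℝ) (Set.Ioi 0) ≤ nhdsWithin (0:ℝ) {0}ᶜ :=
      nhdsWithin_mono _ (fun x hx => ne_of_gt hx)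
    obtain ⟨c, hc1, hc2⟩ := ((hev.filter_mono hle).and self_mem_nhdsWithin).exists
    refine ⟨c, ?_⟩
    have hslope : slope g 0 c = g c / c := by simp [slope_def_field, hg0]
    rw [hslope] at hc1
    rcases div_pos_iff.mp hc1 with ⟨h1, _⟩ | ⟨_, h2⟩
    · exact h1
    · exact absurd hc2 (not_lt.mpr h2.le)

lemma aux_cont {f : ℝ → ℝ}
    (hf : ∀ x y α : ℝ, 0 ≤ α → α ≤ 1 →
      α * f x + (1 - α) * f y ≤ f (α * x + (1 - α) * y)) : Continuous f := by
  have hconc : ConcaveOn ℝ Set.univ f := by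
    refine ⟨convex_univ, fun x _ y _ a b ha hb hab => ?_⟩
    have := hf x y a ha (by linarith)
    have hb' : b = 1 - a := by linarith
    simpa [smul_eq_mul, hb'] using this
  have hconv : ConvexOn ℝ Set.univ (-f) := hconc.neg
  have hc : Continuous (-f) := continuousOn_univ.mp (hconv.continuousOn isOpen_univ)
  simpa using hc.neg

lemma aux_integrable {Y : Type*} [MeasurableSpace Y] {f : ℝ → ℝ} (hcont : Continuous f)
    {g : Y → ℝ} (hg : Measurable g) {M : ℝ}
    (hM : ∀ p, |g p| ≤ M) (ν : Measure Y) [IsFiniteMeasure ν] :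
    Integrable (fun p => f (g p)) ν := by
  obtain ⟨K, hK⟩ := (isCompact_Icc (a := -M) (b := M)).exists_bound_of_continuousOn
    hcont.continuousOn
  refine ⟨(hcont.measurable.comp hg).aestronglyMeasurable, ?_⟩
  exact HasFiniteIntegral.of_bounded (C := K)
    (Filter.Eventually.of_forall fun p => hK _ (abs_le.mp (hM p)))

/-- The relativistic paired objective `D^Rp` (supremum over bounded measurable critics) is
nonnegative, and vanishes iff `P = Q`. -/
theorem DRp_is_divergence
    {X : Type*} [MeasurableSpace X]
    (f : ℝ → ℝ)
    (hf : ∀ x y α : ℝ, 0 ≤ α → α ≤ 1 →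
      α * f x + (1 - α) * f y ≤ f (α * x + (1 - α) * y))
    (hf0 : f 0 = 0)
    (hdiff : DifferentiableAt ℝ f 0)
    (hderiv : deriv f 0 ≠ 0)
    (hbdd : BddAbove (Set.range f))
    (hsup : 0 < ⨆ x, f x)
    (hpos : ∃ xs : ℝ, 0 < xs ∧ 0 < f xs)
    (P Q : Measure X) [IsProbabilityMeasure P] [IsProbabilityMeasure Q]
    (DRp : ℝ)
    (hDRp : DRp = ⨆ C : {C : X → ℝ // Measurable C ∧ ∃ M : ℝ, ∀ x, |C x| ≤ M},
      2 * ∫ p : X × X, f (C.1 p.1 - C.1 p.2) ∂(P.prod Q)) :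
    0 ≤ DRp ∧ (DRp = 0 ↔ P = Q) := by
  have hcont := aux_cont hf
  -- concavity two-point inequality
  have hfpair : ∀ u : ℝ, f u + f (-u) ≤ 0 := by
    intro u
    have h := hf u (-u) (1/2) (by norm_num) (by norm_num)
    have e : (1/2 : ℝ) * u + (1 - 1/2) * (-u) = 0 := by ring
    rw [e, hf0] at h
    linarith
  classical
  -- integrability of the integrand for any bounded measurable critic, any finite measure
  have hInt : ∀ (C : {C : X → ℝ // Measurable C ∧ ∃ M : ℝ, ∀ x, |C x| ≤ M})
      (ν : Measure (X × X)) [IsFiniteMeasure ν],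
      Integrable (fun p : X × X => f (C.1 p.1 - C.1 p.2)) ν := by
    intro C ν _
    obtain ⟨hCm, M, hM⟩ := C.2
    refine aux_integrable hcont ((hCm.comp measurable_fst).sub (hCm.comp measurable_snd))
      (M := 2 * M) (fun p => ?_) ν
    calc |C.1 p.1 - C.1 p.2| ≤ |C.1 p.1| + |C.1 p.2| := abs_sub _ _
    _ ≤ M + M := add_le_add (hM _) (hM _)
    _ = 2 * M := by ring
  -- the objective is bounded above
  have hbddF : BddAbove (Set.range fun C : {C : X → ℝ // Measurable C ∧ ∃ M : ℝ, ∀ x, |C x| ≤ M} =>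
      2 * ∫ p : X × X, f (C.1 p.1 - C.1 p.2) ∂(P.prod Q)) := by
    refine ⟨2 * sSup (Set.range f), ?_⟩
    rintro _ ⟨C, rfl⟩
    have h1 : ∫ p : X × X, f (C.1 p.1 - C.1 p.2) ∂(P.prod Q)
        ≤ ∫ _p : X × X, sSup (Set.range f) ∂(P.prod Q) :=
      integral_mono (hInt C _) (integrable_const _) (fun p => le_csSup hbdd ⟨_, rfl⟩)
    have h2 : ∫ _p : X × X, sSup (Set.range f) ∂(P.prod Q) = sSup (Set.range f) := by simp
    rw [h2] at h1
    dsimp only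
    linarith
  -- the zero critic
  set C0 : {C : X → ℝ // Measurable C ∧ ∃ M : ℝ, ∀ x, |C x| ≤ M} :=
    ⟨fun _ => 0, measurable_const, 0, fun _ => by simp⟩ with hC0
  have hzero : (2 * ∫ p : X × X, f (C0.1 p.1 - C0.1 p.2) ∂(P.prod Q)) = 0 := by
    simp [hC0, hf0]
  have h0le : 0 ≤ DRp := by
    rw [hDRp]
    calc (0:ℝ) = 2 * ∫ p : X × X, f (C0.1 p.1 - C0.1 p.2) ∂(P.prod Q) := hzero.symm
    _ ≤ _ := le_ciSup hbddF C0
  refine ⟨h0le, ?_, ?_⟩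
  · -- DRp = 0 → P = Q
    intro hD
    by_contra hne
    have hs : ∃ s : Set X, MeasurableSet s ∧ P s ≠ Q s := by
      by_contra h
      push_neg at h
      exact hne (Measure.ext fun s hms => h s hms)
    obtain ⟨s, hms, hsne⟩ := hs
    set p : ℝ := (P s).toReal with hp
    set q : ℝ := (Q s).toReal with hq
    have hpq : p ≠ q := fun h =>
      hsne ((ENNReal.toReal_eq_toReal_iff' (measure_ne_top P s) (measure_ne_top Q s)).mp h)
    set g : ℝ → ℝ := fun c => p * (1 - q) * f c + q * (1 - p) * f (-c) with hg
    have h1 := hdiff.hasDerivAt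
    have h1' : HasDerivAt f (deriv f 0) (-0 : ℝ) := by rw [neg_zero]; exact h1
    have h2 : HasDerivAt (fun c : ℝ => f (-c)) (deriv f 0 * (-1)) 0 :=
      h1'.comp 0 (hasDerivAt_neg 0)
    have hderg : HasDerivAt g ((p - q) * deriv f 0) 0 := by
      have : HasDerivAt (fun c => p * (1 - q) * f c + q * (1 - p) * f (-c))
          (p * (1 - q) * deriv f 0 + q * (1 - p) * (deriv f 0 * -1)) 0 :=
        (h1.const_mul (p * (1 - q))).add (h2.const_mul (q * (1 - p)))
      rw [hg]
      convert this using 1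
      ring
    have hd0 : (p - q) * deriv f 0 ≠ 0 := mul_ne_zero (sub_ne_zero.mpr hpq) hderiv
    have hg0 : g 0 = 0 := by simp [hg, hf0]
    obtain ⟨c, hc⟩ := aux_pos_of_deriv hderg hg0 hd0
    -- the critic c · 1_s
    have hCm : Measurable (s.indicator fun _ : X => c) := measurable_const.indicator hms
    have hCb : ∀ x, |s.indicator (fun _ : X => c) x| ≤ |c| := by
      intro x
      by_cases hx : x ∈ s <;> simp [Set.indicator_of_mem, Set.indicator_of_notMem, hx]
    set Cs : {C : X → ℝ // Measurable C ∧ ∃ M : ℝ, ∀ x, |C x| ≤ M} :=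
      ⟨s.indicator fun _ => c, hCm, |c|, hCb⟩ with hCs
    set i : X → ℝ := s.indicator fun _ => (1:ℝ) with hi
    have him : Measurable i := measurable_const.indicator hms
    have hiP : Integrable i P := (integrable_const (1:ℝ)).indicator hms
    have hiQ : Integrable i Q := (integrable_const (1:ℝ)).indicator hms
    have hpoint : ∀ z : X × X, f (Cs.1 z.1 - Cs.1 z.2) =
        f c * (i z.1 * (1 - i z.2)) + f (-c) * ((1 - i z.1) * i z.2) := by
      rintro ⟨x, y⟩
      by_cases hx : x ∈ s <;> by_cases hy : y ∈ s <;>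
        simp [hCs, hi, Set.indicator_of_mem, Set.indicator_of_notMem, hx, hy, hf0]
    have hint1 : Integrable (fun z : X × X => i z.1 * (1 - i z.2)) (P.prod Q) :=
      hiP.mul_prod ((integrable_const (1:ℝ)).sub hiQ)
    have hint2 : Integrable (fun z : X × X => (1 - i z.1) * i z.2) (P.prod Q) :=
      ((integrable_const (1:ℝ)).sub hiP).mul_prod hiQ
    have hiPval : ∫ x, i x ∂P = p := by rw [hi, integral_indicator_const _ hms]; simp [hp, measureReal_def]
    have hiQval : ∫ y, i y ∂Q = q := by rw [hi, integral_indicator_const _ hms]; simp [hq, measureReal_def]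
    have hIval : ∫ z : X × X, f (Cs.1 z.1 - Cs.1 z.2) ∂(P.prod Q) = g c := by
      rw [integral_congr_ae (Filter.Eventually.of_forall hpoint)]
      rw [integral_add (hint1.const_mul _) (hint2.const_mul _),
        integral_const_mul, integral_const_mul,
        integral_prod_mul i (fun y => 1 - i y), integral_prod_mul (fun x => 1 - i x) i]
      rw [integral_sub (integrable_const _) hiQ, integral_sub (integrable_const _) hiP]
      simp only [integral_const, measure_univ, probReal_univ, ENNReal.toReal_one, one_smul, smul_eq_mul]
      rw [hiPval, hiQval, hg]
      ring
    have hle := le_ciSup hbddF Cs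
    rw [← hDRp, hD, hIval] at hle
    linarith
  · -- P = Q → DRp = 0
    rintro rfl
    refine le_antisymm ?_ h0le
    rw [hDRp]
    haveI : Nonempty {C : X → ℝ // Measurable C ∧ ∃ M : ℝ, ∀ x, |C x| ≤ M} := ⟨C0⟩
    refine ciSup_le fun C => ?_
    have hint1 := hInt C (P.prod P)
    have hint2 : Integrable (fun z : X × X => f (C.1 z.2 - C.1 z.1)) (P.prod P) := by
      obtain ⟨hCm, M, hM⟩ := C.2
      refine aux_integrable hcont ((hCm.comp measurable_snd).sub (hCm.comp measurable_fst))
        (M := 2 * M) (fun z => ?_) _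
      calc |C.1 z.2 - C.1 z.1| ≤ |C.1 z.2| + |C.1 z.1| := abs_sub _ _
      _ ≤ M + M := add_le_add (hM _) (hM _)
      _ = 2 * M := by ring
    have hswap : ∫ z : X × X, f (C.1 z.1 - C.1 z.2) ∂(P.prod P)
        = ∫ z : X × X, f (C.1 z.2 - C.1 z.1) ∂(P.prod P) := by
      conv_lhs => rw [← Measure.prod_swap]
      rw [integral_map measurable_swap.aemeasurable
        (by rw [Measure.prod_swap]; exact hint1.1)]
      rfl
    have hsum : ∫ z : X × X, (f (C.1 z.1 - C.1 z.2) + f (C.1 z.2 - C.1 z.1)) ∂(P.prod P) ≤ 0 := by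
      refine integral_nonpos fun z => ?_
      have : C.1 z.2 - C.1 z.1 = -(C.1 z.1 - C.1 z.2) := by ring
      rw [this]
      exact hfpair _
    rw [integral_add hint1 hint2] at hsum
    rw [two_mul]
    nlinarith [hswap]
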